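/- Let T3, T4, T6, c ∈ ℝ and let (h1, h2, h3) : ℝ → ℝ³ be a differentiable solution of the system ḣ1 = −h2·h3, ḣ2 = h1·h3, ḣ3 = h1·c − T4·(h1² − h2²) + (T3 + T6)·h1·h2. Then the function G(t) = h3(t)²/2 − c·h2(t) + (T3 + T6)/4·(h1(t)² − h2(t)²) + T4·h1(t)·h2(t) is constant in t. -/

import Mathlib

theorem first_integral_G_of_vertical_system
    (T3 T4 T6 c : ℝ) (h1 h2 h3 : ℝ → ℝ)
    (hd1 : ∀ t : ℝ, HasDerivAt h1 (-(h2 t * h3 t)) t)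
    (hd2 : ∀ t : ℝ, HasDerivAt h2 (h1 t * h3 t) t)
    (hd3 : ∀ t : ℝ, HasDerivAt h3
      (h1 t * c - T4 * (h1 t ^ 2 - h2 t ^ 2) + (T3 + T6) * h1 t * h2 t) t) :
    ∀ t : ℝ,
      h3 t ^ 2 / 2 - c * h2 t + (T3 + T6) / 4 * (h1 t ^ 2 - h2 t ^ 2)
          + T4 * h1 t * h2 t
        = h3 0 ^ 2 / 2 - c * h2 0 + (T3 + T6) / 4 * (h1 0 ^ 2 - h2 0 ^ 2)
          + T4 * h1 0 * h2 0 := by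
  set G : ℝ → ℝ := fun t =>
    h3 t ^ 2 / 2 - c * h2 t + (T3 + T6) / 4 * (h1 t ^ 2 - h2 t ^ 2)
      + T4 * h1 t * h2 t with hG
  have hderiv : ∀ t : ℝ, HasDerivAt G 0 t := by
    intro t
    have h :=
      ((((hd3 t).pow 2).div_const 2).sub ((hd2 t).const_mul c)).add
        ((((hd1 t).pow 2).sub ((hd2 t).pow 2)).const_mul ((T3 + T6) / 4)) |>.add
        ((((hd1 t).const_mul T4).mul (hd2 t)).congr_deriv rfl)
    convert h using 1
    · rfl
    · rfl
    · ext x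
      simp only [hG, Pi.add_apply, Pi.sub_apply, Pi.mul_apply, Pi.pow_apply]
    · norm_num
      ring
  intro t
  have := is_const_of_deriv_eq_zero (f := G)
    (fun x => (hderiv x).differentiableAt)
    (fun x => (hderiv x).deriv) t 0
  simpa [hG] using this
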